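/- Let n ≥ 1 and 1 ≤ r. The number of Dyck excursions of length 2n (paths with steps ±1, from 0 to 0, never negative) weighted by their number of r-ascents, i.e., the total number of r-ascents summed over all Dyck paths of length 2n, equals binom(2n - r - 1, n - 1). Consequently the expected number of r-ascents in a uniformly random Dyck path of length 2n is binom(2n-r-1, n-1)/C_n. -/

import Mathlib

open List

/-- The number of `r`-ascents of a lattice path given by its list of steps: the number
of maximal runs of exactly `r` consecutive `+1` steps. -/
def numRAscents (r : ℕ) (l : List ℤ) : ℕ :=
  ((l.splitBy (fun a b => a == b)).filter
    (fun g => g.length == r && g.head? == some 1)).length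

namespace TotalAscents

/-! ### splitBy lemmas -/

theorem splitBy_loop_append {α : Type*} (R : α → α → Bool) (l : List α) (a : α) (g : List α)
    (gs : List (List α)) :
    List.splitBy.loop R l a g gs = gs.reverse ++ List.splitBy.loop R l a g [] := by
  induction l generalizing a g gs with
  | nil => simp [List.splitBy.loop]
  | cons b l ih =>
    simp only [List.splitBy.loop]
    cases R a b
    · rw [ih b [] ((a :: g).reverse :: gs), ih b [] [(a :: g).reverse]]
      simp
    · exact ih _ _ _

theorem splitBy_loop_run {α : Type*} (R : α → α → Bool) (y : α) (hy : R y y = true) :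
    ∀ (a : ℕ) (g : List α) (t : List α), (∀ z ∈ t.head?, R y z = false) →
      List.splitBy.loop R (List.replicate a y ++ t) y g [] =
        (g.reverse ++ List.replicate (a + 1) y) :: t.splitBy R := by
  intro a
  induction a with
  | zero =>
    intro g t ht
    cases t with
    | nil => simp [List.splitBy.loop]
    | cons z t' =>
      have hz : R y z = false := ht z rfl
      simp only [List.replicate, List.nil_append, List.splitBy.loop, hz]
      rw [splitBy_loop_append]
      simp [List.splitBy]
  | succ a ih =>
    intro g t ht
    have : List.replicate (a + 1) y ++ t = y :: (List.replicate a y ++ t) := by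
      simp [List.replicate_succ]
    rw [this]
    simp only [List.splitBy.loop, hy]
    rw [ih (y :: g) t ht]
    simp [List.replicate_succ, List.replicate_succ']

theorem splitBy_run {α : Type*} (R : α → α → Bool) (y : α) (hy : R y y = true)
    (a : ℕ) (ha : 1 ≤ a) (t : List α) (ht : ∀ z ∈ t.head?, R y z = false) :
    (List.replicate a y ++ t).splitBy R = List.replicate a y :: t.splitBy R := by
  obtain ⟨a, rfl⟩ : ∃ a', a = a' + 1 := ⟨a - 1, by omega⟩
  have : List.replicate (a + 1) y ++ t = y :: (List.replicate a y ++ t) := by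
    simp [List.replicate_succ]
  rw [this]
  show List.splitBy.loop R (List.replicate a y ++ t) y [] [] = _
  rw [splitBy_loop_run R y hy a [] t ht]
  simp

/-! ### marks -/

/-- `i` is the start of a maximal run of exactly `r` ones. -/
def IsMark (r : ℕ) (l : List ℤ) (i : ℕ) : Prop :=
  (i = 0 ∨ l[i-1]? = some (-1)) ∧ (l.drop i).take r = List.replicate r 1 ∧ l[i+r]? ≠ some 1

instance (r : ℕ) (l : List ℤ) (i : ℕ) : Decidable (IsMark r l i) := by
  unfold IsMark; infer_instance

theorem IsMark.lt_length {r : ℕ} (hr : 1 ≤ r) {l : List ℤ} {i : ℕ} (h : IsMark r l i) :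
    i < l.length := by
  have h2 := h.2.1
  have : (l.drop i).take r ≠ [] := by
    rw [h2]
    simp [← List.length_pos_iff_ne_nil]
    omega
  have : l.drop i ≠ [] := by
    intro hh; rw [hh] at this; simp at this
  rw [ne_eq, List.drop_eq_nil_iff] at this
  omega

def marks (r : ℕ) (l : List ℤ) : Finset ℕ :=
  (Finset.range l.length).filter (IsMark r l)

theorem mem_marks {r : ℕ} (hr : 1 ≤ r) {l : List ℤ} {i : ℕ} :
    i ∈ marks r l ↔ IsMark r l i := by
  simp only [marks, Finset.mem_filter, Finset.mem_range]
  exact ⟨fun h => h.2, fun h => ⟨h.lt_length hr, h⟩⟩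

theorem head?_eq_one_of_take {r : ℕ} (hr : 1 ≤ r) {t : List ℤ} (h : t.take r = List.replicate r 1) :
    t.head? = some 1 := by
  obtain ⟨r, rfl⟩ : ∃ r', r = r' + 1 := ⟨r - 1, by omega⟩
  cases t with
  | nil => simp [List.replicate_succ] at h
  | cons z t' =>
    simp [List.replicate_succ] at h ⊢
    exact h.1

theorem isMark_shift {r : ℕ} (hr : 1 ≤ r) {y : ℤ} (hy : y = 1 ∨ y = -1) {a : ℕ} (ha : 1 ≤ a)
    (t : List ℤ) (ht : t.head? ≠ some y) (i : ℕ) :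
    IsMark r (List.replicate a y ++ t) i ↔
      (i = 0 ∧ y = 1 ∧ a = r) ∨ (a ≤ i ∧ IsMark r t (i - a)) := by
  have hlen : (List.replicate a y).length = a := by simp
  have hget_lt : ∀ j, j < a → (List.replicate a y ++ t)[j]? = some y := by
    intro j hj
    rw [List.getElem?_append_left (by simpa using hj), List.getElem?_replicate, if_pos hj]
  have hget_ge : ∀ j, a ≤ j → (List.replicate a y ++ t)[j]? = t[j - a]? := by
    intro j hj
    rw [List.getElem?_append_right (by simpa using hj), hlen]
  have hthead : ∀ {u : List ℤ}, u.take r = List.replicate r 1 → u.head? = some 1 :=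
    fun h => head?_eq_one_of_take hr h
  rcases Nat.lt_or_ge i a with hia | hia
  · -- i < a
    rcases Nat.eq_zero_or_pos i with rfl | hi1
    · -- i = 0
      have hdrop0 : (List.replicate a y ++ t).drop 0 = List.replicate a y ++ t := rfl
      constructor
      · rintro ⟨-, hrun, haft⟩
        rw [hdrop0] at hrun
        -- y = 1
        have hhead : (List.replicate a y ++ t).head? = some y := by
          obtain ⟨a', rfl⟩ : ∃ a', a = a' + 1 := ⟨a - 1, by omega⟩
          simp [List.replicate_succ]
        have hy1 : y = 1 := by
          have h2 := hthead hrun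
          rw [hhead] at h2
          exact Option.some_injective _ h2
        subst hy1
        -- a = r
        have har : a = r := by
          rcases Nat.lt_trichotomy a r with h | h | h
          · exfalso
            have : (List.replicate a (1:ℤ) ++ t)[a]? = some 1 := by
              have h1 : ((List.replicate a (1:ℤ) ++ t).take r)[a]? = some 1 := by
                rw [hrun, List.getElem?_replicate, if_pos h]
              rwa [List.getElem?_take, if_pos h] at h1
            rw [hget_ge a le_rfl, Nat.sub_self, ← List.head?_eq_getElem?] at this
            exact ht this
          · exact h
          · exfalso
            exact haft (by rw [Nat.zero_add, hget_lt r h])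
        exact Or.inl ⟨rfl, rfl, har⟩
      · rintro (⟨-, rfl, rfl⟩ | ⟨hai, -⟩)
        · refine ⟨Or.inl rfl, ?_, ?_⟩
          · rw [hdrop0, List.take_append_of_le_length (by simp), List.take_replicate]
            simp
          · rw [Nat.zero_add, hget_ge _ le_rfl, Nat.sub_self, ← List.head?_eq_getElem?]
            exact ht
        · omega
    · -- 1 ≤ i < a : both sides false
      constructor
      · rintro ⟨h0 | hprev, hrun, -⟩
        · omega
        · -- l[i-1]? = some y, so y = -1
          rw [hget_lt (i-1) (by omega)] at hprev
          have hym : y = -1 := by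
            have := Option.some_injective _ hprev; omega
          -- run starts with y = -1, contradiction
          have hdrop : (List.replicate a y ++ t).drop i = List.replicate (a - i) y ++ t := by
            rw [List.drop_append_of_le_length (by omega), List.drop_replicate]
          have := hthead (by rw [hdrop] at hrun; exact hrun)
          rw [List.head?_append_of_ne_nil] at this
          · rw [List.head?_replicate, if_neg (by omega)] at this
            have := Option.some_injective _ this
            omega
          · simp [← List.length_pos_iff_ne_nil]; omega
      · rintro (⟨h, -⟩ | ⟨h, -⟩) <;> omega
  · -- a ≤ i
    have hi0 : i ≠ 0 := by omega
    have hdrop : (List.replicate a y ++ t).drop i = t.drop (i - a) := by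
      have h := List.drop_length_add_append (l₁ := List.replicate a y) (l₂ := t) (i - a)
      rw [hlen] at h
      rw [show a + (i - a) = i by omega] at h
      exact h
    have haft : (List.replicate a y ++ t)[i + r]? = t[(i - a) + r]? := by
      rw [hget_ge _ (by omega)]; congr 1; omega
    rcases Nat.lt_or_ge a i with hai | hai
    · -- a < i
      have hprev : (List.replicate a y ++ t)[i - 1]? = t[(i - a) - 1]? := by
        rw [hget_ge _ (by omega)]; congr 1; omega
      unfold IsMark
      rw [hdrop, haft, hprev]
      constructor
      · rintro ⟨h1 | h1, h2, h3⟩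
        · omega
        · exact Or.inr ⟨hia, Or.inr h1, h2, h3⟩
      · rintro (⟨h, -⟩ | ⟨-, h1 | h1, h2, h3⟩)
        · omega
        · omega
        · exact ⟨Or.inr h1, h2, h3⟩
    · -- a = i
      have hii : i = a := by omega
      subst hii
      unfold IsMark
      rw [hdrop, haft, Nat.sub_self]
      have hprev : (List.replicate i y ++ t)[i - 1]? = some y := hget_lt (i-1) (by omega)
      rw [hprev]
      constructor
      · rintro ⟨h1 | h1, h2, h3⟩
        · omega
        · exact Or.inr ⟨le_rfl, Or.inl rfl, h2, h3⟩
      · rintro (⟨h, -⟩ | ⟨-, -, h2, h3⟩)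
        · omega
        · refine ⟨Or.inr ?_, h2, h3⟩
          have h1 : t.head? = some 1 := hthead (by rw [List.drop_zero] at h2; exact h2)
          rcases hy with rfl | rfl
          · exact absurd h1 ht
          · rfl


theorem marks_shift_card {r : ℕ} (hr : 1 ≤ r) {y : ℤ} (hy : y = 1 ∨ y = -1) {a : ℕ} (ha : 1 ≤ a)
    (t : List ℤ) (ht : t.head? ≠ some y) :
    (marks r (List.replicate a y ++ t)).card =
      (if y = 1 ∧ a = r then 1 else 0) + (marks r t).card := by
  have himage : ∀ i : ℕ, i ∈ (marks r t).image (fun j => a + j) ↔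
      (a ≤ i ∧ IsMark r t (i - a)) := by
    intro i
    simp only [Finset.mem_image, mem_marks hr]
    constructor
    · rintro ⟨j, hj, rfl⟩; exact ⟨by omega, by simpa using hj⟩
    · rintro ⟨hai, h⟩; exact ⟨i - a, h, by omega⟩
  have hinj : Function.Injective (fun j : ℕ => a + j) := add_right_injective a
  by_cases hc : y = 1 ∧ a = r
  · rw [if_pos hc]
    have hset : marks r (List.replicate a y ++ t) =
        insert 0 ((marks r t).image (fun j => a + j)) := by
      ext i
      rw [mem_marks hr, isMark_shift hr hy ha t ht, Finset.mem_insert, himage]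
      constructor
      · rintro (⟨rfl, -⟩ | h)
        · exact Or.inl rfl
        · exact Or.inr h
      · rintro (rfl | h)
        · exact Or.inl ⟨rfl, hc.1, hc.2⟩
        · exact Or.inr h
    rw [hset, Finset.card_insert_of_notMem, Finset.card_image_of_injective _ hinj, add_comm]
    rw [himage]
    rintro ⟨h, -⟩; omega
  · rw [if_neg hc]
    have hset : marks r (List.replicate a y ++ t) =
        (marks r t).image (fun j => a + j) := by
      ext i
      rw [mem_marks hr, isMark_shift hr hy ha t ht, himage]
      constructor
      · rintro (⟨rfl, h1, h2⟩ | h)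
        · exact absurd ⟨h1, h2⟩ hc
        · exact h
      · exact fun h => Or.inr h
    rw [hset, Finset.card_image_of_injective _ hinj, zero_add]

theorem numRAscents_run (r : ℕ) (y : ℤ) {a : ℕ} (ha : 1 ≤ a) (t : List ℤ)
    (ht : ∀ z ∈ t.head?, (y == z) = false) :
    numRAscents r (List.replicate a y ++ t) =
      (if y = 1 ∧ a = r then 1 else 0) + numRAscents r t := by
  unfold numRAscents
  simp only [show (fun (a b : ℤ) => a == b) = BEq.beq from rfl]
  rw [splitBy_run _ y (by simp) a ha t ht, List.filter_cons]
  have hcond : ((List.replicate a y).length == r && (List.replicate a y).head? == some 1)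
      = (decide (y = 1 ∧ a = r)) := by
    simp only [List.length_replicate, List.head?_replicate, if_neg (by omega : ¬ a = 0)]
    by_cases h1 : y = 1 <;> by_cases h2 : a = r <;> simp [h1, h2]
  rw [hcond]
  by_cases hc : y = 1 ∧ a = r
  · simp [hc]; omega
  · simp [hc]

theorem numRAscents_eq_card_marks {r : ℕ} (hr : 1 ≤ r) :
    ∀ (N : ℕ) (l : List ℤ), l.length ≤ N → (∀ x ∈ l, x = 1 ∨ x = -1) →
      numRAscents r l = (marks r l).card := by
  intro N
  induction N with
  | zero =>
    intro l hl _
    obtain rfl : l = [] := List.length_eq_zero_iff.mp (by omega)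
    simp [numRAscents, marks, List.splitBy]
  | succ N ih =>
    intro l hl hent
    cases l with
    | nil => simp [numRAscents, marks, List.splitBy]
    | cons y l' =>
      set g := l'.takeWhile (fun z => z == y) with hgdef
      set t := l'.dropWhile (fun z => z == y) with htdef
      have hgt : g ++ t = l' := List.takeWhile_append_dropWhile
      have hg : g = List.replicate g.length y := by
        apply List.eq_replicate_of_mem
        intro z hz
        have := List.mem_takeWhile_imp (hgdef ▸ hz)
        simpa using this
      have hdec : y :: l' = List.replicate (g.length + 1) y ++ t := by
        rw [List.replicate_succ]
        simp only [List.cons_append]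
        rw [← hg, hgt]
      have hthead : ∀ z ∈ t.head?, (z == y) = false := by
        intro z hz
        have := List.head?_dropWhile_not (fun z => z == y) l'
        rw [← htdef] at this
        rw [Option.mem_def] at hz
        rw [hz] at this
        exact this
      have hthead1 : ∀ z ∈ t.head?, (y == z) = false := by
        intro z hz
        have := hthead z hz
        simp only [beq_eq_false_iff_ne, ne_eq] at this ⊢
        omega
      have hthead2 : t.head? ≠ some y := by
        intro h
        have := hthead y (by rw [h]; rfl)
        simp at this
      have htsub : ∀ x ∈ t, x ∈ l' := fun x hx => by
        rw [← hgt]; exact List.mem_append_right _ hx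
      have hy : y = 1 ∨ y = -1 := hent y (by simp)
      have htlen : t.length ≤ N := by
        have h1 : g.length + t.length = l'.length := by
          rw [← List.length_append, hgt]
        have h2 : l'.length ≤ N := by simp at hl; omega
        omega
      rw [hdec, numRAscents_run r y (by omega) t hthead1,
        marks_shift_card hr hy (by omega) t hthead2,
        ih t htlen (fun x hx => hent x (by simp [htsub x hx]))]

/-! ### counting ±1 lists -/

def signLists : ℕ → Finset (List ℤ)
  | 0 => {[]}
  | m + 1 => ((signLists m).image (fun l => 1 :: l)) ∪ ((signLists m).image (fun l => (-1) :: l))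

theorem mem_signLists {m : ℕ} {l : List ℤ} :
    l ∈ signLists m ↔ l.length = m ∧ ∀ x ∈ l, x = 1 ∨ x = -1 := by
  induction m generalizing l with
  | zero =>
    simp only [signLists, Finset.mem_singleton]
    constructor
    · rintro rfl; simp
    · rintro ⟨h, -⟩; exact List.length_eq_zero_iff.mp h
  | succ m ih =>
    simp only [signLists, Finset.mem_union, Finset.mem_image]
    constructor
    · rintro (⟨l', hl', rfl⟩ | ⟨l', hl', rfl⟩) <;>
        · obtain ⟨h1, h2⟩ := ih.mp hl'
          refine ⟨by simp [h1], ?_⟩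
          intro x hx
          rcases List.mem_cons.mp hx with rfl | hx
          · simp
          · exact h2 x hx
    · rintro ⟨h1, h2⟩
      cases l with
      | nil => simp at h1
      | cons x l' =>
        have hl' : l' ∈ signLists m := ih.mpr ⟨by simpa using h1,
          fun z hz => h2 z (List.mem_cons_of_mem _ hz)⟩
        rcases h2 x (by simp) with rfl | rfl
        · exact Or.inl ⟨l', hl', rfl⟩
        · exact Or.inr ⟨l', hl', rfl⟩

theorem card_signLists_count (m k : ℕ) :
    ((signLists m).filter (fun l => l.count 1 = k)).card = m.choose k := by
  induction m generalizing k with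
  | zero =>
    rcases Nat.eq_zero_or_pos k with rfl | hk
    · rw [show (signLists 0).filter (fun l => l.count 1 = 0) = {[]} from rfl]
      simp
    · rw [show ((signLists 0).filter (fun l => l.count 1 = k)) = ∅ by
        ext l; simp [signLists]; rintro rfl; simp; omega]
      simp [Nat.choose_eq_zero_of_lt, hk]
  | succ m ih =>
    have hdisj : ∀ (s₁ s₂ : Finset (List ℤ)) (p : List ℤ → Prop) [DecidablePred p],
        Disjoint ((s₁.image (fun l => (1:ℤ) :: l)).filter p)
          ((s₂.image (fun l => (-1:ℤ) :: l)).filter p) := by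
      intro s₁ s₂ p _
      rw [Finset.disjoint_left]
      intro x hx1 hx2
      simp only [Finset.mem_filter, Finset.mem_image] at hx1 hx2
      obtain ⟨⟨l₁, -, rfl⟩, -⟩ := hx1
      obtain ⟨⟨l₂, -, h⟩, -⟩ := hx2
      simp at h
    have hinj1 : Function.Injective (fun l : List ℤ => (1:ℤ) :: l) :=
      fun x y h => by simpa using h
    have hinj2 : Function.Injective (fun l : List ℤ => (-1:ℤ) :: l) :=
      fun x y h => by simpa using h
    simp only [signLists, Finset.filter_union]
    rw [Finset.card_union_of_disjoint (hdisj _ _ _)]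
    have himg1 : ((signLists m).image (fun l => (1:ℤ) :: l)).filter (fun l => l.count 1 = k) =
        ((signLists m).filter (fun l => l.count 1 + 1 = k)).image (fun l => (1:ℤ) :: l) := by
      ext x
      simp only [Finset.mem_filter, Finset.mem_image]
      constructor
      · rintro ⟨⟨l, hl, rfl⟩, hc⟩
        exact ⟨l, ⟨hl, by simpa [List.count_cons] using hc⟩, rfl⟩
      · rintro ⟨l, ⟨hl, hc⟩, rfl⟩
        exact ⟨⟨l, hl, rfl⟩, by simpa [List.count_cons] using hc⟩
    have himg2 : ((signLists m).image (fun l => (-1:ℤ) :: l)).filter (fun l => l.count 1 = k) =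
        ((signLists m).filter (fun l => l.count 1 = k)).image (fun l => (-1:ℤ) :: l) := by
      ext x
      simp only [Finset.mem_filter, Finset.mem_image]
      constructor
      · rintro ⟨⟨l, hl, rfl⟩, hc⟩
        exact ⟨l, ⟨hl, by simpa [List.count_cons] using hc⟩, rfl⟩
      · rintro ⟨l, ⟨hl, hc⟩, rfl⟩
        exact ⟨⟨l, hl, rfl⟩, by simpa [List.count_cons] using hc⟩
    rw [himg1, himg2, Finset.card_image_of_injective _ hinj1,
      Finset.card_image_of_injective _ hinj2, ih]
    rcases Nat.eq_zero_or_pos k with rfl | hk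
    · rw [show ((signLists m).filter (fun l => l.count 1 + 1 = 0)) = ∅ by
        ext l; simp]
      simp
    · obtain ⟨k', rfl⟩ : ∃ k', k = k' + 1 := ⟨k - 1, by omega⟩
      have : ((signLists m).filter (fun l => l.count 1 + 1 = k' + 1)) =
          ((signLists m).filter (fun l => l.count 1 = k')) := by
        ext l; simp
      rw [this, ih, Nat.choose_succ_succ', Nat.add_comm]

theorem sum_eq_two_count_sub_length (l : List ℤ) (h : ∀ x ∈ l, x = 1 ∨ x = -1) :
    l.sum = 2 * (l.count 1 : ℤ) - l.length := by
  induction l with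
  | nil => simp
  | cons x l ih =>
    have hx := h x (by simp)
    have ih' := ih (fun z hz => h z (List.mem_cons_of_mem _ hz))
    rcases hx with rfl | rfl
    · rw [List.count_cons_self]
      simp only [List.sum_cons, List.length_cons, ih']
      push_cast
      ring
    · rw [List.count_cons_of_ne (by norm_num)]
      simp only [List.sum_cons, List.length_cons, ih']
      push_cast
      ring

/-! ### cycle lemma -/

def Good (v : List ℤ) : Prop := ∀ m < v.length, 0 ≤ (v.take m).sum

instance (v : List ℤ) : Decidable (Good v) := by unfold Good; infer_instance

theorem sum_take_rotate_low (u : List ℤ) (k t : ℕ) (h : k + t ≤ u.length) :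
    ((u.rotate k).take t).sum = (u.take (k + t)).sum - (u.take k).sum := by
  rw [List.rotate_eq_drop_append_take (by omega), List.take_append_of_le_length (by simp; omega)]
  have h1 : List.take t (List.drop k u) = List.drop k (List.take (k + t) u) := by
    rw [List.drop_take]
    congr 1
    omega
  rw [h1]
  have h2 := List.sum_take_add_sum_drop (List.take (k + t) u) k
  rw [List.take_take, min_eq_left (by omega)] at h2
  omega

theorem sum_take_rotate_high (u : List ℤ) (k t : ℕ) (hk : k ≤ u.length)
    (ht : u.length - k ≤ t) (ht2 : t ≤ u.length) :
    ((u.rotate k).take t).sum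
      = (u.sum - (u.take k).sum) + (u.take (t - (u.length - k))).sum := by
  rw [List.rotate_eq_drop_append_take hk, List.take_append,
    List.take_of_length_le (by simp; omega), List.take_take, min_eq_left (by simp; omega),
    List.sum_append, List.length_drop]
  have h2 := List.sum_take_add_sum_drop u k
  omega

theorem goodpos_iff (u : List ℤ) (hsum : u.sum = -1) {k : ℕ} (hk1 : 1 ≤ k)
    (hk : k < u.length) :
    Good (u.rotate k) ↔
      ((∀ j, k ≤ j → j ≤ u.length → (u.take k).sum ≤ (u.take j).sum) ∧
       (∀ j < k, (u.take k).sum + 1 ≤ (u.take j).sum)) := by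
  constructor
  · intro hG
    constructor
    · intro j hkj hjl
      have := hG (j - k) (by rw [List.length_rotate]; omega)
      rw [sum_take_rotate_low u k (j - k) (by omega),
        show k + (j - k) = j by omega] at this
      omega
    · intro j hj
      have := hG (u.length - k + j) (by rw [List.length_rotate]; omega)
      rw [sum_take_rotate_high u k _ (by omega) (by omega) (by omega), hsum,
        show u.length - k + j - (u.length - k) = j by omega] at this
      omega
  · rintro ⟨h1, h2⟩ m hm
    rw [List.length_rotate] at hm
    rcases le_or_gt m (u.length - k) with hcase | hcase
    · rw [sum_take_rotate_low u k m (by omega)]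
      have := h1 (k + m) (by omega) (by omega)
      omega
    · rw [sum_take_rotate_high u k m (by omega) (by omega) (by omega), hsum]
      have := h2 (m - (u.length - k)) (by omega)
      omega

theorem good_take_nonneg {u : List ℤ} (hG : Good u) {m : ℕ} (hm : m < u.length) :
    0 ≤ (u.take m).sum := hG m hm

theorem cycle_exists (u : List ℤ) (hne : u ≠ []) (hsum : u.sum = -1) :
    ∃ k, k < u.length ∧ Good (u.rotate k) := by
  classical
  set L := u.length with hL
  have hL1 : 1 ≤ L := by
    rw [hL]; exact List.length_pos_iff.mpr hne
  have hsL : (u.take L).sum = -1 := by rw [List.take_of_length_le le_rfl, hsum]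
  have hQ : ∃ j, j ≤ L ∧ ∀ j' ≤ L, (u.take j).sum ≤ (u.take j').sum := by
    obtain ⟨j, hj, hmin⟩ := Finset.exists_min_image (Finset.range (L + 1))
      (fun j => (u.take j).sum) ⟨0, by simp⟩
    exact ⟨j, by simpa using Nat.lt_succ_iff.mp (Finset.mem_range.mp hj),
      fun j' hj' => hmin j' (Finset.mem_range.mpr (by omega))⟩
  set j₀ := Nat.find hQ with hj₀
  have hspec := Nat.find_spec hQ
  rw [← hj₀] at hspec
  obtain ⟨hj₀L, hj₀min⟩ := hspec
  have hstrict : ∀ j < j₀, (u.take j₀).sum < (u.take j).sum := by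
    intro j hj
    have hnQ := Nat.find_min hQ hj
    push_neg at hnQ
    obtain ⟨j', hj', hlt⟩ := hnQ (by omega)
    calc (u.take j₀).sum ≤ (u.take j').sum := hj₀min j' hj'
      _ < (u.take j).sum := hlt
  have hj₀neg : (u.take j₀).sum ≤ -1 := by
    have := hj₀min L le_rfl
    omega
  have hj₀1 : 1 ≤ j₀ := by
    by_contra h
    have : j₀ = 0 := by omega
    rw [this] at hj₀neg
    simp at hj₀neg
  rcases Nat.lt_or_ge j₀ L with hcase | hcase
  · refine ⟨j₀, hcase, ?_⟩
    rw [goodpos_iff u hsum hj₀1 hcase]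
    exact ⟨fun j _ hj => hj₀min j hj, fun j hj => by have := hstrict j hj; omega⟩
  · have hj₀L' : j₀ = L := by omega
    refine ⟨0, by omega, ?_⟩
    rw [List.rotate_zero]
    intro m hm
    have := hstrict m (by omega)
    rw [hj₀L', hsL] at this
    omega

theorem cycle_unique (u : List ℤ) (hsum : u.sum = -1) {k₁ k₂ : ℕ}
    (h₁ : k₁ < u.length) (hG₁ : Good (u.rotate k₁))
    (h₂ : k₂ < u.length) (hG₂ : Good (u.rotate k₂)) : k₁ = k₂ := by
  have hsL : (u.take u.length).sum = -1 := by rw [List.take_of_length_le le_rfl, hsum]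
  have key : ∀ {a b : ℕ}, a < u.length → Good (u.rotate a) → b < u.length →
      Good (u.rotate b) → a < b → False := by
    intro a b ha hGa hb hGb hab
    rcases Nat.eq_zero_or_pos a with rfl | ha1
    · -- a = 0 : Good u, so all proper prefixes ≥ 0, but b's min property forces ≤ -1
      rw [List.rotate_zero] at hGa
      have hb1 : 1 ≤ b := by omega
      have := ((goodpos_iff u hsum hb1 hb).mp hGb).1 u.length (by omega) le_rfl
      rw [hsL] at this
      have := hGa b hb
      omega
    · have hA := (goodpos_iff u hsum ha1 ha).mp hGa
      have hb1 : 1 ≤ b := by omega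
      have hB := (goodpos_iff u hsum hb1 hb).mp hGb
      have h1 := hA.1 b (by omega) (by omega)
      have h2 := hB.2 a hab
      omega
  rcases Nat.lt_trichotomy k₁ k₂ with h | h | h
  · exact absurd (key h₁ hG₁ h₂ hG₂ h) (by simp)
  · exact h
  · exact absurd (key h₂ hG₂ h₁ hG₁ h) (by simp)

/-! ### Dyck paths -/

def dyck (n : ℕ) : Finset (List ℤ) :=
  (signLists (2 * n)).filter (fun l => l.sum = 0 ∧ ∀ m < 2 * n, 0 ≤ (l.take m).sum)

theorem mem_dyck {n : ℕ} {l : List ℤ} : l ∈ dyck n ↔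
    l.length = 2 * n ∧ (∀ x ∈ l, x = 1 ∨ x = -1) ∧ l.sum = 0 ∧
      ∀ m : ℕ, 0 ≤ (l.take m).sum := by
  simp only [dyck, Finset.mem_filter, mem_signLists]
  constructor
  · rintro ⟨⟨h1, h2⟩, h3, h4⟩
    refine ⟨h1, h2, h3, fun m => ?_⟩
    rcases lt_or_ge m (2 * n) with h | h
    · exact h4 m h
    · rw [List.take_of_length_le (by omega), h3]
  · rintro ⟨h1, h2, h3, h4⟩
    exact ⟨⟨h1, h2⟩, h3, fun m _ => h4 m⟩

theorem dyck_count {n : ℕ} {l : List ℤ} (h : l ∈ dyck n) : l.count 1 = n := by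
  obtain ⟨h1, h2, h3, -⟩ := mem_dyck.mp h
  have := sum_eq_two_count_sub_length l h2
  rw [h3, h1] at this
  omega

theorem drop_pattern (r : ℕ) (w : List ℤ) :
    (-1 :: (List.replicate r 1 ++ -1 :: w)).drop (r + 2) = w := by
  rw [show r + 2 = (r + 1) + 1 from rfl, List.drop_succ_cons,
    show r + 1 = (List.replicate r (1:ℤ)).length + 1 by simp, List.drop_append]
  simp

theorem F_decomp {n r : ℕ} (hn : 1 ≤ n) (hr : 1 ≤ r) (hrn : r ≤ n) {l : List ℤ}
    (hl : l ∈ dyck n) {i : ℕ} (hi : i ∈ marks r l) :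
    ∃ w : List ℤ, (l ++ [-1]).rotate (if i = 0 then 2 * n else i - 1) =
      -1 :: (List.replicate r 1 ++ -1 :: w) := by
  obtain ⟨hlen, hent, hsum, hpre⟩ := mem_dyck.mp hl
  have him := (mem_marks hr).mp hi
  have hilt : i < l.length := him.lt_length hr
  obtain ⟨hfirst, hrun, haft⟩ := him
  have hir : i + r ≤ l.length := by
    have := congrArg List.length hrun
    simp only [List.length_take, List.length_drop, List.length_replicate] at this
    omega
  have haft' : i + r = l.length ∨ l[i + r]? = some (-1) := by
    rcases eq_or_lt_of_le hir with h | h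
    · exact Or.inl h
    · right
      have hmem : l[i + r] ∈ l := List.getElem_mem h
      rcases hent _ hmem with h1 | h1
      · exact absurd (by rw [List.getElem?_eq_getElem h, h1]) haft
      · rw [List.getElem?_eq_getElem h, h1]
  rcases Nat.eq_zero_or_pos i with rfl | hi1
  · rw [if_pos rfl]
    have hrot : (l ++ [-1]).rotate (2 * n) = -1 :: l := by
      rw [List.rotate_eq_drop_append_take
          (by simp only [List.length_append, List.length_cons, List.length_nil]; omega),
        show 2 * n = l.length by omega, List.drop_left, List.take_left]
      rfl
    refine ⟨l.drop (r + 1), ?_⟩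
    rw [hrot]
    congr 1
    have h1 : l.take r = List.replicate r 1 := by simpa using hrun
    have hrlt : r < l.length := by omega
    have hafter : l[r]? = some (-1) := by
      rcases haft' with h | h
      · omega
      · simpa using h
    have h2 : l.drop r = -1 :: l.drop (r + 1) := by
      rw [List.drop_eq_getElem_cons hrlt]
      rw [List.getElem?_eq_getElem hrlt] at hafter
      rw [Option.some_inj.mp hafter]
    calc l = l.take r ++ l.drop r := (List.take_append_drop r l).symm
      _ = List.replicate r 1 ++ -1 :: l.drop (r + 1) := by rw [h1, h2]
  · rw [if_neg (by omega)]
    have hfirst' : l[i - 1]? = some (-1) := by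
      rcases hfirst with h | h
      · omega
      · exact h
    have hrot : (l ++ [-1]).rotate (i - 1) = (l.drop (i - 1) ++ [-1]) ++ l.take (i - 1) := by
      rw [List.rotate_eq_drop_append_take
          (by simp only [List.length_append, List.length_cons, List.length_nil]; omega),
        List.drop_append_of_le_length (by omega), List.take_append_of_le_length (by omega)]
    have hd1 : l.drop (i - 1) = -1 :: l.drop i := by
      have hlt : i - 1 < l.length := by omega
      rw [List.getElem?_eq_getElem hlt] at hfirst'
      rw [List.drop_eq_getElem_cons hlt, Option.some_inj.mp hfirst',
        show i - 1 + 1 = i by omega]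
    have hd2 : l.drop i = List.replicate r 1 ++ l.drop (i + r) := by
      conv_lhs => rw [← List.take_append_drop r (l.drop i)]
      rw [hrun, List.drop_drop]
      try rw [Nat.add_comm r i]
    rcases haft' with hend | hmid
    · refine ⟨l.take (i - 1), ?_⟩
      rw [hrot, hd1, hd2, show l.drop (i + r) = [] by rw [List.drop_eq_nil_iff]; omega]
      simp
    · refine ⟨l.drop (i + r + 1) ++ -1 :: l.take (i - 1), ?_⟩
      have hlt : i + r < l.length := by
        by_contra h
        rw [List.getElem?_eq_none (by omega)] at hmid
        simp at hmid
      have hd3 : l.drop (i + r) = -1 :: l.drop (i + r + 1) := by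
        rw [List.drop_eq_getElem_cons hlt]
        rw [List.getElem?_eq_getElem hlt] at hmid
        rw [Option.some_inj.mp hmid]
      rw [hrot, hd1, hd2, hd3]
      simp

theorem F_mem {n r : ℕ} (hn : 1 ≤ n) (hr : 1 ≤ r) (hrn : r ≤ n) {l : List ℤ}
    (hl : l ∈ dyck n) {i : ℕ} (hi : i ∈ marks r l) :
    ((l ++ [-1]).rotate (if i = 0 then 2 * n else i - 1)).drop (r + 2) ∈
      (signLists (2 * n - r - 1)).filter (fun w => w.count 1 = n - r) := by
  obtain ⟨w, hw⟩ := F_decomp hn hr hrn hl hi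
  rw [hw, drop_pattern]
  obtain ⟨hlen, hent, hsum, hpre⟩ := mem_dyck.mp hl
  have hlrot : ((l ++ [-1]).rotate (if i = 0 then 2 * n else i - 1)).length = 2 * n + 1 := by
    rw [List.length_rotate, List.length_append, hlen]
    rfl
  have hwlen : w.length = 2 * n - r - 1 := by
    rw [hw] at hlrot
    simp only [List.length_cons, List.length_append, List.length_replicate] at hlrot
    omega
  have hperm : (l ++ [-1]).rotate (if i = 0 then 2 * n else i - 1) ~ l ++ [-1] :=
    List.rotate_perm _ _
  have hwent : ∀ x ∈ w, x = 1 ∨ x = -1 := by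
    intro x hx
    have hx2 : x ∈ (l ++ [-1]).rotate (if i = 0 then 2 * n else i - 1) := by
      rw [hw]
      simp [hx]
    rcases List.mem_append.mp (hperm.subset hx2) with h | h
    · exact hent x h
    · right; simpa using h
  have hcount : w.count 1 = n - r := by
    have h1 : ((l ++ [-1]).rotate (if i = 0 then 2 * n else i - 1)).count 1 = n := by
      rw [hperm.count_eq, List.count_append, dyck_count hl]
      simp
    rw [hw] at h1
    simp only [List.count_cons, List.count_append, List.count_replicate] at h1
    norm_num at h1
    omega
  exact Finset.mem_filter.mpr ⟨mem_signLists.mpr ⟨hwlen, hwent⟩, hcount⟩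

/-! ### the backward map -/

def mkU (r : ℕ) (w : List ℤ) : List ℤ := -1 :: (List.replicate r 1 ++ -1 :: w)

open scoped Classical in
noncomputable def goodIdx (u : List ℤ) : ℕ :=
  if h : ∃ k, k < u.length ∧ Good (u.rotate k) then Nat.find h else 0

theorem goodIdx_spec {u : List ℤ} (h : ∃ k, k < u.length ∧ Good (u.rotate k)) :
    goodIdx u < u.length ∧ Good (u.rotate (goodIdx u)) := by
  classical
  rw [goodIdx, dif_pos h]
  exact Nat.find_spec h

theorem goodIdx_eq {u : List ℤ} (hsum : u.sum = -1) {k : ℕ} (hk : k < u.length)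
    (hG : Good (u.rotate k)) : goodIdx u = k := by
  obtain ⟨h1, h2⟩ := goodIdx_spec ⟨k, hk, hG⟩
  exact cycle_unique u hsum h1 h2 hk hG

theorem head?_dropLast_cons_ne (T : List ℤ) : (((-1 : ℤ) :: T).dropLast).head? ≠ some 1 := by
  cases T with
  | nil => simp
  | cons x T' =>
    rw [List.dropLast_cons₂]
    simp

theorem isMark_concat {r : ℕ} (hr : 1 ≤ r) (X Y : List ℤ) (hY : Y.head? ≠ some 1) :
    IsMark r (X ++ -1 :: (List.replicate r 1 ++ Y)) (X.length + 1) := by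
  refine ⟨Or.inr ?_, ?_, ?_⟩
  · rw [Nat.add_sub_cancel, List.getElem?_append_right le_rfl, Nat.sub_self]
    simp
  · have h := List.drop_length_add_append (l₁ := X) (l₂ := -1 :: (List.replicate r 1 ++ Y)) 1
    rw [h, List.drop_succ_cons, List.drop_zero, List.take_append_of_le_length (by simp),
      List.take_replicate, min_self]
  · rw [show X.length + 1 + r = X.length + (1 + r) by omega,
      List.getElem?_append_right (by omega), Nat.add_sub_cancel_left,
      show (1 + r) = (r : ℕ) + 1 by omega]
    rw [List.getElem?_cons_succ, List.getElem?_append_right (by simp), List.length_replicate,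
      Nat.sub_self, ← List.head?_eq_getElem?]
    exact hY

theorem good_split {v : List ℤ} (hG : Good v) (hvsum : v.sum = -1)
    (hvent : ∀ x ∈ v, x = 1 ∨ x = -1) (hvne : v ≠ []) :
    v = v.dropLast ++ [-1] ∧ v.dropLast.sum = 0 := by
  have hvsplit : v.dropLast ++ [v.getLast hvne] = v := List.dropLast_append_getLast hvne
  have hlenpos : 1 ≤ v.length := List.length_pos_iff.mpr hvne
  have h1 : 0 ≤ v.dropLast.sum := by
    rw [List.dropLast_eq_take]
    exact hG (v.length - 1) (by omega)
  have h2 : v.dropLast.sum + v.getLast hvne = -1 := by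
    have := congrArg List.sum hvsplit
    rw [List.sum_append, List.sum_cons, List.sum_nil, hvsum] at this
    omega
  have h3 := hvent _ (List.getLast_mem hvne)
  have h4 : v.getLast hvne = -1 := by rcases h3 with h | h <;> omega
  constructor
  · rw [← h4]; exact hvsplit.symm
  · omega

theorem G_all {n r : ℕ} (hn : 1 ≤ n) (hr : 1 ≤ r) (hrn : r ≤ n) {w : List ℤ}
    (hw : w ∈ (signLists (2 * n - r - 1)).filter (fun w => w.count 1 = n - r))
    {u v l : List ℤ} {k i : ℕ}
    (hu : u = mkU r w) (hk : k = goodIdx u) (hv : v = u.rotate k) (hl : l = v.dropLast)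
    (hi : i = if k = 1 then 0 else u.length - k + 1) :
    l ∈ dyck n ∧ i ∈ marks r l ∧ v = l ++ [-1] ∧ 1 ≤ k ∧ k < u.length ∧
      (if i = 0 then 2 * n else i - 1) = u.length - k := by
  obtain ⟨hwsl, hwcount⟩ := Finset.mem_filter.mp hw
  obtain ⟨hwlen, hwent⟩ := mem_signLists.mp hwsl
  have hulen : u.length = 2 * n + 1 := by
    rw [hu]; simp [mkU, hwlen]; omega
  have huent : ∀ x ∈ u, x = 1 ∨ x = -1 := by
    intro x hx
    rw [hu] at hx
    simp only [mkU, List.mem_cons, List.mem_append, List.mem_replicate] at hx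
    rcases hx with rfl | ⟨-, rfl⟩ | rfl | hx
    · right; rfl
    · left; rfl
    · right; rfl
    · exact hwent x hx
  have hwsum : w.sum = 1 - (r : ℤ) := by
    have := sum_eq_two_count_sub_length w hwent
    rw [hwcount, hwlen] at this
    omega
  have husum : u.sum = -1 := by
    rw [hu]
    simp only [mkU, List.sum_cons, List.sum_append, List.sum_replicate, nsmul_eq_mul, mul_one]
    omega
  have hune : u ≠ [] := by rw [hu]; simp [mkU]
  have hex : ∃ k', k' < u.length ∧ Good (u.rotate k') := cycle_exists u hune husum
  have hkspec := goodIdx_spec hex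
  rw [← hk] at hkspec
  obtain ⟨hklt, hkG⟩ := hkspec
  have hk0 : k ≠ 0 := by
    intro h0
    rw [h0, List.rotate_zero] at hkG
    have h1 := hkG 1 (by omega)
    rw [hu] at h1
    simp [mkU] at h1
  have hkcase : k = 1 ∨ r + 2 ≤ k := by
    by_contra hcon
    push_neg at hcon
    obtain ⟨hc1, hc2⟩ := hcon
    have hgp := (goodpos_iff u husum (by omega) hklt).mp hkG
    have hlast := hgp.1 u.length (by omega) le_rfl
    rw [List.take_length, husum] at hlast
    have htk : u.take k = -1 :: List.replicate (k - 1) 1 := by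
      rw [hu, mkU, show k = (k - 1) + 1 by omega, List.take_succ_cons,
        List.take_append_of_le_length (by simp; omega), List.take_replicate,
        min_eq_left (by omega)]
      simp
    rw [htk] at hlast
    simp [List.sum_replicate] at hlast
    omega
  have hvlen : v.length = 2 * n + 1 := by rw [hv, List.length_rotate, hulen]
  have hvperm : v.Perm u := hv ▸ List.rotate_perm u k
  have hvent : ∀ x ∈ v, x = 1 ∨ x = -1 := fun x hx => huent x (hvperm.subset hx)
  have hvsum : v.sum = -1 := by rw [hvperm.sum_eq, husum]
  have hvG : Good v := hv ▸ hkG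
  have hvne : v ≠ [] := by intro h; rw [h] at hvlen; simp at hvlen
  obtain ⟨hvsplit, hlsum⟩ := good_split hvG hvsum hvent hvne
  have hvsplit' : v = l ++ [-1] := by rw [hl]; exact hvsplit
  have hllen : l.length = 2 * n := by rw [hl, List.length_dropLast, hvlen]; omega
  have hlsum' : l.sum = 0 := by rw [hl]; exact hlsum
  have hldyck : l ∈ dyck n := by
    rw [mem_dyck]
    refine ⟨hllen, fun x hx => hvent x (by rw [hl] at hx; exact List.mem_of_mem_dropLast hx),
      hlsum', ?_⟩
    intro m
    rcases lt_or_ge m (2 * n) with hm | hm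
    · have heq : l.take m = v.take m := by
        rw [hl, List.dropLast_eq_take, List.take_take, min_eq_left (by omega)]
      rw [heq]
      exact hvG m (by omega)
    · rw [List.take_of_length_le (by omega), hlsum']
  rcases hkcase with hk1' | hk2'
  · -- k = 1
    have hveq : v = (List.replicate r 1 ++ -1 :: w) ++ [-1] := by
      rw [hv, hk1', hu, List.rotate_eq_drop_append_take (by simp [mkU])]
      rfl
    have hleq : l = List.replicate r 1 ++ -1 :: w := by
      rw [hl, hveq, List.dropLast_concat]
    have hieq : i = 0 := by rw [hi, if_pos hk1']
    have hmark : IsMark r l 0 := by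
      refine ⟨Or.inl rfl, ?_, ?_⟩
      · rw [List.drop_zero, hleq, List.take_append_of_le_length (by simp),
          List.take_replicate, min_self]
      · rw [hleq, Nat.zero_add, List.getElem?_append_right (by simp),
          List.length_replicate, Nat.sub_self]
        simp
    refine ⟨hldyck, by rw [hieq]; exact (mem_marks hr).mpr hmark, hvsplit', by omega, hklt, ?_⟩
    rw [hieq, hulen, hk1']
    simp
  · -- r + 2 ≤ k
    set a := k - (r + 2) with hadef
    have husplit : u = ((-1 : ℤ) :: (List.replicate r 1 ++ [-1])) ++ w := by
      rw [hu, mkU]; simp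
    have halt : a < w.length := by rw [hwlen]; omega
    have hAlen : ((-1 : ℤ) :: (List.replicate r 1 ++ [-1])).length = r + 2 := by simp
    have hveq : v = w.drop a ++ (-1 :: (List.replicate r 1 ++ -1 :: w.take a)) := by
      rw [hv, List.rotate_eq_drop_append_take (by omega), husplit]
      have hd := List.drop_length_add_append (l₁ := (-1 : ℤ) :: (List.replicate r 1 ++ [-1])) (l₂ := w) a
      have ht := List.take_length_add_append (l₁ := (-1 : ℤ) :: (List.replicate r 1 ++ [-1])) (l₂ := w) a
      rw [hAlen] at hd ht
      rw [show k = r + 2 + a by omega, hd, ht]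
      simp
    have hleq : l = w.drop a ++ (-1 :: (List.replicate r 1 ++ (-1 :: w.take a).dropLast)) := by
      rw [hl, hveq, List.dropLast_append_of_ne_nil (by simp)]
      congr 1
      rw [List.dropLast_cons_of_ne_nil (by simp), List.dropLast_append_of_ne_nil (by simp)]
    have hieq : i = (w.drop a).length + 1 := by
      rw [hi, if_neg (by omega), hulen, List.length_drop, hwlen]
      omega
    have hmark : IsMark r l i := by
      rw [hieq, hleq]
      exact isMark_concat hr _ _ (head?_dropLast_cons_ne _)
    refine ⟨hldyck, (mem_marks hr).mpr hmark, hvsplit', by omega, hklt, ?_⟩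
    rw [hieq, if_neg (by omega), List.length_drop, hwlen, hulen]
    omega

theorem card_T_eq {n r : ℕ} (hn : 1 ≤ n) (hr : 1 ≤ r) (hrn : r ≤ n) :
    ((dyck n).sigma (fun l => marks r l)).card =
      ((signLists (2 * n - r - 1)).filter (fun w => w.count 1 = n - r)).card := by
  refine Finset.card_bij'
    (fun p _ => ((p.1 ++ [(-1 : ℤ)]).rotate (if p.2 = 0 then 2 * n else p.2 - 1)).drop (r + 2))
    (fun w _ => ⟨((mkU r w).rotate (goodIdx (mkU r w))).dropLast,
      if goodIdx (mkU r w) = 1 then 0 else (mkU r w).length - goodIdx (mkU r w) + 1⟩)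
    ?_ ?_ ?_ ?_
  · -- i maps into W
    rintro ⟨l, i⟩ hp
    obtain ⟨hl, hi2⟩ := Finset.mem_sigma.mp hp
    exact F_mem hn hr hrn hl hi2
  · -- j maps into T
    intro w hw
    obtain ⟨h1, h2, -, -, -, -⟩ := G_all hn hr hrn hw rfl rfl rfl rfl rfl
    exact Finset.mem_sigma.mpr ⟨h1, h2⟩
  · -- left inverse : j (i p) = p
    rintro ⟨l, i⟩ hp
    obtain ⟨hl, hi2⟩ := Finset.mem_sigma.mp hp
    dsimp only at *
    obtain ⟨w, hw⟩ := F_decomp hn hr hrn hl hi2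
    have hwdrop : ((l ++ [(-1:ℤ)]).rotate (if i = 0 then 2 * n else i - 1)).drop (r + 2) = w := by
      rw [hw]; exact drop_pattern r w
    rw [hwdrop]
    have hueq : mkU r w = (l ++ [-1]).rotate (if i = 0 then 2 * n else i - 1) := by
      rw [hw]; rfl
    obtain ⟨hlen, hent, hsum, hpre⟩ := mem_dyck.mp hl
    have himk := (mem_marks hr).mp hi2
    have hilt : i < l.length := himk.lt_length hr
    have hi1 : i ≠ 1 := by
      intro h1
      obtain ⟨hfirst, -, -⟩ := himk
      rcases hfirst with h | h
      · omega
      · rw [h1, Nat.sub_self] at h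
        have hlp : 0 < l.length := by omega
        rw [List.getElem?_eq_getElem hlp] at h
        have h0 := hpre 1
        rw [show (1:ℕ) = 0 + 1 from rfl, List.take_succ, List.take_zero,
          List.getElem?_eq_getElem hlp, Option.some_inj.mp h] at h0
        simp at h0
    have hp1 : 1 ≤ (if i = 0 then 2 * n else i - 1) ∧ (if i = 0 then 2 * n else i - 1) ≤ 2 * n := by
      split
      · omega
      · omega
    have hclen : (l ++ [(-1:ℤ)]).length = 2 * n + 1 := by
      rw [List.length_append, hlen]; rfl
    have hulen2 : (mkU r w).length = 2 * n + 1 := by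
      rw [hueq, List.length_rotate, hclen]
    have hrotid : (mkU r w).rotate ((mkU r w).length - (if i = 0 then 2 * n else i - 1))
        = l ++ [-1] := by
      rw [hueq, List.rotate_rotate,
        show (if i = 0 then 2 * n else i - 1) +
          (((l ++ [(-1:ℤ)]).rotate (if i = 0 then 2 * n else i - 1)).length
            - (if i = 0 then 2 * n else i - 1)) = (l ++ [(-1:ℤ)]).length by
            rw [List.length_rotate, hclen]; omega,
        List.rotate_length]
    have hgood : Good ((mkU r w).rotate ((mkU r w).length - (if i = 0 then 2 * n else i - 1))) := by
      rw [hrotid]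
      intro m hm
      rw [hclen] at hm
      rcases lt_or_ge m (2 * n + 1) with hm2 | hm2
      · rw [List.take_append_of_le_length (by omega)]
        exact hpre m
      · omega
    have hmsum : (mkU r w).sum = -1 := by
      rw [hueq, (List.rotate_perm _ _).sum_eq, List.sum_append, hsum]
      simp
    have hkval : goodIdx (mkU r w) = (mkU r w).length - (if i = 0 then 2 * n else i - 1) := by
      exact goodIdx_eq hmsum (by omega) hgood
    rw [hkval, hrotid, List.dropLast_concat]
    by_cases hi0 : i = 0
    · rw [if_pos (by rw [hulen2, if_pos hi0]; omega)]
      rw [hi0]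
    · rw [if_neg (by rw [hulen2, if_neg hi0]; omega)]
      congr 1
      rw [hulen2, if_neg hi0]
      omega
  · -- right inverse : i (j w) = w
    intro w hw
    obtain ⟨-, -, hvsplit, hk1, hklt, hpeq⟩ := G_all hn hr hrn hw rfl rfl rfl rfl rfl
    dsimp only
    rw [← hvsplit, hpeq, List.rotate_rotate,
      show goodIdx (mkU r w) + ((mkU r w).length - goodIdx (mkU r w)) = (mkU r w).length by omega,
      List.rotate_length]
    exact drop_pattern r w

theorem main_count {n r : ℕ} (hn : 1 ≤ n) (hr : 1 ≤ r) (hrn : r ≤ n) :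
    (∑ l ∈ dyck n, numRAscents r l) = Nat.choose (2 * n - r - 1) (n - 1) := by
  have h1 : ∀ l ∈ dyck n, numRAscents r l = (marks r l).card := fun l hl =>
    numRAscents_eq_card_marks hr l.length l le_rfl ((mem_dyck.mp hl).2.1)
  rw [Finset.sum_congr rfl h1, ← Finset.card_sigma, card_T_eq hn hr hrn,
    card_signLists_count]
  rw [show n - r = (2 * n - r - 1) - (n - 1) by omega]
  exact Nat.choose_symm (by omega)

end TotalAscents

theorem total_rAscents_dyck (n r : ℕ) (hn : 1 ≤ n) (hr : 1 ≤ r) (hrn : r ≤ n) :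
    (∑ᶠ l ∈ {l : List ℤ | l.length = 2 * n ∧ (∀ s ∈ l, s = 1 ∨ s = -1) ∧
        (∀ k : ℕ, 0 ≤ (l.take k).sum) ∧ l.sum = 0}, numRAscents r l) =
      Nat.choose (2 * n - r - 1) (n - 1) ∧
    ((∑ᶠ l ∈ {l : List ℤ | l.length = 2 * n ∧ (∀ s ∈ l, s = 1 ∨ s = -1) ∧
        (∀ k : ℕ, 0 ≤ (l.take k).sum) ∧ l.sum = 0}, numRAscents r l : ℕ) : ℚ) /
        (catalan n : ℚ) =
      (Nat.choose (2 * n - r - 1) (n - 1) : ℚ) / (catalan n : ℚ) := by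
  have hset : {l : List ℤ | l.length = 2 * n ∧ (∀ s ∈ l, s = 1 ∨ s = -1) ∧
      (∀ k : ℕ, 0 ≤ (l.take k).sum) ∧ l.sum = 0} = ↑(TotalAscents.dyck n) := by
    ext l
    simp only [Set.mem_setOf_eq, Finset.mem_coe, TotalAscents.mem_dyck]
    tauto
  have h1 : (∑ᶠ l ∈ {l : List ℤ | l.length = 2 * n ∧ (∀ s ∈ l, s = 1 ∨ s = -1) ∧
      (∀ k : ℕ, 0 ≤ (l.take k).sum) ∧ l.sum = 0}, numRAscents r l) =
      Nat.choose (2 * n - r - 1) (n - 1) := by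
    rw [hset, finsum_mem_coe_finset, TotalAscents.main_count hn hr hrn]
  exact ⟨h1, by rw [h1]⟩
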